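/- Let U be an open set in ℝⁿ and let Φ be an interval function on U (a real-valued function on closed axis-parallel boxes contained in U that is additive over finite partitions of a box into boxes with pairwise disjoint interiors). Suppose that at every point x ∈ U the density D_Φ(x) exists and is finite, i.e. Φ(Q)/m(Q) converges to D_Φ(x) as boxes Q ⊂ U containing x have diameter tending to 0, and that D_Φ is locally Lebesgue integrable on U. Then Φ(Q) = ∫_Q D_Φ(x) dx for every box Q ⊂ U. -/

import Mathlib

open MeasureTheory

/-- A (nondegenerate) closed axis-parallel box in `ℝⁿ`. -/
def IsBox {n : ℕ} (Q : Set (Fin n → ℝ)) : Prop :=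
  ∃ a b : Fin n → ℝ, (∀ i, a i < b i) ∧ Q = Set.Icc a b

/-- A finite partition of a box into boxes with pairwise disjoint interiors. -/
def IsBoxPartition {n : ℕ} (Q : Set (Fin n → ℝ)) {m : ℕ}
    (P : Fin m → Set (Fin n → ℝ)) : Prop :=
  (∀ i, IsBox (P i)) ∧ (⋃ i, P i) = Q ∧
    Pairwise fun i j => Disjoint (interior (P i)) (interior (P j))

/-- An interval function on an open set `U`: a real-valued function on closed axis-parallel
boxes contained in `U` that is additive over finite partitions of a box into boxes with
pairwise disjoint interiors. -/
def IsIntervalFunction {n : ℕ} (U : Set (Fin n → ℝ)) (Φ : Set (Fin n → ℝ) → ℝ) : Prop :=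
  ∀ Q : Set (Fin n → ℝ), IsBox Q → Q ⊆ U →
    ∀ (m : ℕ) (P : Fin m → Set (Fin n → ℝ)), IsBoxPartition Q P →
      Φ Q = ∑ i, Φ (P i)

/-- The upper density of an interval function at a point:
`limsup_{x ∈ Q, δ(Q) → 0} Φ(Q)/m(Q) = inf_{ε>0} sup {Φ(Q)/m(Q) : x ∈ Q ⊆ U, δ(Q) ≤ ε}`,
with values in `[-∞, +∞]`. -/
noncomputable def upperDensity {n : ℕ} (U : Set (Fin n → ℝ)) (Φ : Set (Fin n → ℝ) → ℝ)
    (x : Fin n → ℝ) : EReal :=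
  ⨅ (ε : ℝ) (_ : 0 < ε),
    ⨆ (Q : Set (Fin n → ℝ)) (_ : IsBox Q ∧ x ∈ Q ∧ Q ⊆ U ∧ Metric.diam Q ≤ ε),
      ((Φ Q / (volume Q).toReal : ℝ) : EReal)

/-- The lower density of an interval function at a point:
`liminf_{x ∈ Q, δ(Q) → 0} Φ(Q)/m(Q) = sup_{ε>0} inf {Φ(Q)/m(Q) : x ∈ Q ⊆ U, δ(Q) ≤ ε}`,
with values in `[-∞, +∞]`. -/
noncomputable def lowerDensity {n : ℕ} (U : Set (Fin n → ℝ)) (Φ : Set (Fin n → ℝ) → ℝ)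
    (x : Fin n → ℝ) : EReal :=
  ⨆ (ε : ℝ) (_ : 0 < ε),
    ⨅ (Q : Set (Fin n → ℝ)) (_ : IsBox Q ∧ x ∈ Q ∧ Q ⊆ U ∧ Metric.diam Q ≤ ε),
      ((Φ Q / (volume Q).toReal : ℝ) : EReal)

/-- `Φ` has finite density `L` at `x` (relative to `U`): `Φ(Q)/m(Q) → L` as boxes
`Q ⊆ U` containing `x` have diameter tending to `0`. -/
def HasBoxDensityAt {n : ℕ} (U : Set (Fin n → ℝ)) (Φ : Set (Fin n → ℝ) → ℝ)
    (L : ℝ) (x : Fin n → ℝ) : Prop :=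
  ∀ ε > 0, ∃ τ > 0, ∀ Q : Set (Fin n → ℝ), IsBox Q → x ∈ Q → Q ⊆ U →
    Metric.diam Q ≤ τ → |Φ Q / (volume Q).toReal - L| ≤ ε

open BoxIntegral Set Metric

lemma interior_boxIcc_subset {n : ℕ} (J : BoxIntegral.Box (Fin n)) :
    interior (BoxIntegral.Box.Icc J) ⊆ (J : Set (Fin n → ℝ)) := by
  rw [BoxIntegral.Box.Icc_eq_pi, interior_pi_set finite_univ, BoxIntegral.Box.coe_eq_pi]
  exact Set.pi_mono fun i _ => by rw [interior_Icc]; exact Ioo_subset_Ioc_self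

lemma boxIcc_eq_closure {n : ℕ} (I : BoxIntegral.Box (Fin n)) :
    BoxIntegral.Box.Icc I = closure (I : Set (Fin n → ℝ)) := by
  rw [BoxIntegral.Box.Icc_eq_pi, BoxIntegral.Box.coe_eq_pi, closure_pi_set]
  exact Set.pi_congr rfl fun i _ => (closure_Ioc (I.lower_lt_upper i).ne).symm

lemma phi_sum_partition {n : ℕ} {U : Set (Fin n → ℝ)} {Φ : Set (Fin n → ℝ) → ℝ}
    (hΦ : IsIntervalFunction U Φ) (I : BoxIntegral.Box (Fin n))
    (hIU : BoxIntegral.Box.Icc I ⊆ U)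
    (π : BoxIntegral.Prepartition I) (hπ : π.IsPartition) :
    Φ (BoxIntegral.Box.Icc I) = ∑ J ∈ π.boxes, Φ (BoxIntegral.Box.Icc J) := by
  classical
  set m := π.boxes.card with hm
  set e : π.boxes ≃ Fin m := π.boxes.equivFin with he
  set P : Fin m → Set (Fin n → ℝ) :=
    fun i => BoxIntegral.Box.Icc ((e.symm i : π.boxes) : BoxIntegral.Box (Fin n)) with hP
  have hPJ : ∀ J : π.boxes, P (e J) = BoxIntegral.Box.Icc (J : BoxIntegral.Box (Fin n)) := by
    intro J; simp [hP]
  have hbp : IsBoxPartition (BoxIntegral.Box.Icc I) P := by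
    refine ⟨fun i => ⟨_, _, ((e.symm i : π.boxes) : BoxIntegral.Box (Fin n)).lower_lt_upper, rfl⟩,
      ?_, ?_⟩
    · apply subset_antisymm
      · exact Set.iUnion_subset fun i =>
          BoxIntegral.Box.le_iff_Icc.1 (π.le_of_mem (e.symm i : π.boxes).2)
      · intro x hx
        rw [boxIcc_eq_closure, ← hπ.iUnion_eq] at hx
        have hsub : π.iUnion ⊆ ⋃ i, P i := by
          intro y hy
          rw [BoxIntegral.Prepartition.iUnion_def] at hy
          obtain ⟨J, hJ, hyJ⟩ := Set.mem_iUnion₂.1 hy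
          exact Set.mem_iUnion.2 ⟨e ⟨J, hJ⟩, (hPJ ⟨J, hJ⟩).symm ▸ BoxIntegral.Box.coe_subset_Icc hyJ⟩
        have hclosed : IsClosed (⋃ i, P i) :=
          isClosed_iUnion_of_finite fun i =>
            ((e.symm i : π.boxes) : BoxIntegral.Box (Fin n)).isCompact_Icc.isClosed
        exact closure_minimal hsub hclosed hx
    · intro i j hij
      have hne : ((e.symm i : π.boxes) : BoxIntegral.Box (Fin n)) ≠
          ((e.symm j : π.boxes) : BoxIntegral.Box (Fin n)) :=
        fun h => hij (by simpa using e.symm.injective (Subtype.coe_injective h))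
      exact (π.disjoint_coe_of_mem (e.symm i : π.boxes).2 (e.symm j : π.boxes).2 hne).mono
        (interior_boxIcc_subset _) (interior_boxIcc_subset _)
  calc Φ (BoxIntegral.Box.Icc I) = ∑ i, Φ (P i) :=
        hΦ _ ⟨I.lower, I.upper, I.lower_lt_upper, rfl⟩ hIU m P hbp
    _ = ∑ J : π.boxes, Φ (BoxIntegral.Box.Icc (J : BoxIntegral.Box (Fin n))) :=
        (Equiv.sum_comp e.symm fun J : π.boxes =>
          Φ (BoxIntegral.Box.Icc (J : BoxIntegral.Box (Fin n))))
    _ = ∑ J ∈ π.boxes, Φ (BoxIntegral.Box.Icc J) := Finset.sum_coe_sort π.boxes fun J => Φ (BoxIntegral.Box.Icc J)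

/-- **Multidimensional fundamental theorem of calculus.** If an interval function Φ on an
open set `U ⊆ ℝⁿ` has a finite density `D_Φ(x) = D x` at every point of `U` (i.e.
`Φ(Q)/m(Q) → D x` as boxes `Q ⊆ U` containing `x` have diameter tending to `0`), and
`D` is locally Lebesgue integrable on `U`, then `Φ(Q) = ∫_Q D_Φ(x) dx` for every box
`Q ⊆ U`. -/
theorem intervalFunction_eq_integral_density {n : ℕ}
    (U : Set (Fin n → ℝ)) (hU : IsOpen U)
    (Φ : Set (Fin n → ℝ) → ℝ) (hΦ : IsIntervalFunction U Φ)
    (D : (Fin n → ℝ) → ℝ)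
    (hD : ∀ x ∈ U, HasBoxDensityAt U Φ (D x) x)
    (hloc : LocallyIntegrableOn D U volume) :
    ∀ Q : Set (Fin n → ℝ), IsBox Q → Q ⊆ U → Φ Q = ∫ x in Q, D x := by
  classical
  intro Q hQ hQU
  obtain ⟨a, b, hab, rfl⟩ := hQ
  set I : BoxIntegral.Box (Fin n) := ⟨a, b, hab⟩ with hI
  have hIcc : BoxIntegral.Box.Icc I = Set.Icc a b := rfl
  have hIntQ : IntegrableOn D (Set.Icc a b) volume :=
    hloc.integrableOn_compact_subset hQU isCompact_Icc
  have hIntI : IntegrableOn D (I : Set (Fin n → ℝ)) volume :=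
    hIntQ.mono_set (hIcc ▸ BoxIntegral.Box.coe_subset_Icc)
  have hbox := hIntI.hasBoxIntegral (⊥ : BoxIntegral.IntegrationParams) rfl
  rw [BoxIntegral.hasIntegral_iff] at hbox
  have hval : (∫ x in (I : Set (Fin n → ℝ)), D x) = ∫ x in Set.Icc a b, D x := by
    rw [← hIcc]; exact setIntegral_congr_set I.coe_ae_eq_Icc
  set V := (volume : Measure (Fin n → ℝ)).toBoxAdditive I with hV
  have hV0 : 0 ≤ V := by
    rw [hV, Measure.toBoxAdditive_apply]; exact ENNReal.toReal_nonneg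
  have key : ∀ ε : ℝ, 0 < ε →
      |Φ (Set.Icc a b) - ∫ x in Set.Icc a b, D x| ≤ ε * (V + 1) := by
    intro ε hε
    obtain ⟨δ0, hδ0, hthick⟩ := isCompact_Icc.exists_thickening_subset_open hU hQU
    have hτex : ∀ x : Fin n → ℝ, ∃ τ : ℝ, 0 < τ ∧ (x ∈ U →
        ∀ Q' : Set (Fin n → ℝ), IsBox Q' → x ∈ Q' → Q' ⊆ U → Metric.diam Q' ≤ τ →
          |Φ Q' / (volume Q').toReal - D x| ≤ ε) := by
      intro x
      by_cases hx : x ∈ U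
      · obtain ⟨τ, hτ0, h⟩ := hD x hx ε hε
        exact ⟨τ, hτ0, fun _ => h⟩
      · exact ⟨1, one_pos, fun h => absurd h hx⟩
    choose τ hτ0 hτs using hτex
    set r₀ : (Fin n → ℝ) → Set.Ioi (0 : ℝ) :=
      fun x => ⟨min (τ x) δ0 / 2, by
        simp only [Set.mem_Ioi]; exact div_pos (lt_min (hτ0 x) hδ0) two_pos⟩ with hr₀
    obtain ⟨r, hr, hrint⟩ := hbox ε hε
    set r' : NNReal → (Fin n → ℝ) → Set.Ioi (0 : ℝ) :=
      fun c x => ⟨min (r c x) (r₀ x), Set.mem_Ioi.2 (lt_min (r c x).2 (r₀ x).2)⟩ with hr'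
    obtain ⟨π, hπp, hπH, hπsub, -, hπdist⟩ :=
      BoxIntegral.Box.exists_taggedPartition_isHenstock_isSubordinate_homothetic I
        (r' I.distortion)
    have hmem : (⊥ : BoxIntegral.IntegrationParams).MemBaseSet I I.distortion
        (r I.distortion) π := by
      refine ⟨hπsub.mono fun x _ => min_le_left _ _, fun _ => hπH, fun _ => hπdist.le,
        fun _ => ⟨⊥, by
          rw [BoxIntegral.Prepartition.iUnion_bot,
            show π.iUnion = ↑I from hπp.iUnion_eq, Set.diff_self], by simp⟩⟩
    have hdist := hrint I.distortion π hmem hπp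
    -- per-box estimate
    have hbound : ∀ J ∈ π.boxes,
        |Φ (BoxIntegral.Box.Icc J) -
          (volume : Measure (Fin n → ℝ)).toBoxAdditive J * D (π.tag J)| ≤
          ε * (volume : Measure (Fin n → ℝ)).toBoxAdditive J := by
      intro J hJ
      set x := π.tag J with hx
      have hxI : x ∈ Set.Icc a b := hIcc ▸ π.tag_mem_Icc J
      have hxU : x ∈ U := hQU hxI
      have hxJ : x ∈ BoxIntegral.Box.Icc J := hπH J hJ
      have hsubJ : BoxIntegral.Box.Icc J ⊆
          Metric.closedBall x (r' I.distortion x) := hπsub J hJ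
      have hρ : (r' I.distortion x : ℝ) ≤ min (τ x) δ0 / 2 := min_le_right _ _
      have hρ0 : (0:ℝ) ≤ r' I.distortion x := (r' I.distortion x).2.le
      have hdiam : Metric.diam (BoxIntegral.Box.Icc J) ≤ τ x := by
        refine le_trans ((Metric.diam_mono hsubJ Metric.isBounded_closedBall).trans
          (Metric.diam_closedBall hρ0)) ?_
        calc 2 * (r' I.distortion x : ℝ) ≤ 2 * (min (τ x) δ0 / 2) := by linarith
          _ = min (τ x) δ0 := by ring
          _ ≤ τ x := min_le_left _ _
      have hJU : BoxIntegral.Box.Icc J ⊆ U := by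
        intro y hy
        apply hthick
        rw [Metric.mem_thickening_iff]
        refine ⟨x, hxI, lt_of_le_of_lt (hsubJ hy) ?_⟩
        calc (r' I.distortion x : ℝ) ≤ min (τ x) δ0 / 2 := hρ
          _ ≤ δ0 / 2 := by gcongr; exact min_le_right _ _
          _ < δ0 := by linarith
      have hdens := hτs x hxU (BoxIntegral.Box.Icc J)
        ⟨J.lower, J.upper, J.lower_lt_upper, rfl⟩ hxJ hJU hdiam
      have hvol : (volume (BoxIntegral.Box.Icc J)).toReal =
          (volume : Measure (Fin n → ℝ)).toBoxAdditive J := by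
        rw [BoxIntegral.Box.Icc_def, Real.volume_Icc_pi_toReal J.lower_le_upper,
          BoxIntegral.Box.volume_apply]
      have hv : (0:ℝ) < (volume : Measure (Fin n → ℝ)).toBoxAdditive J := by
        rw [BoxIntegral.Box.volume_apply]
        exact Finset.prod_pos fun i _ => sub_pos.2 (J.lower_lt_upper i)
      rw [hvol] at hdens
      set v := (volume : Measure (Fin n → ℝ)).toBoxAdditive J
      calc |Φ (BoxIntegral.Box.Icc J) - v * D x|
          = |Φ (BoxIntegral.Box.Icc J) / v - D x| * |v| := by
            rw [← abs_mul, sub_mul, div_mul_cancel₀ _ hv.ne', mul_comm (D x) v]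
        _ = |Φ (BoxIntegral.Box.Icc J) / v - D x| * v := by rw [abs_of_pos hv]
        _ ≤ ε * v := by
            exact mul_le_mul_of_nonneg_right hdens hv.le
    have hΦsum : Φ (Set.Icc a b) = ∑ J ∈ π.boxes, Φ (BoxIntegral.Box.Icc J) := by
      rw [← hIcc]
      exact phi_sum_partition hΦ I (hIcc ▸ hQU) π.toPrepartition hπp
    have hsumV : ∑ J ∈ π.boxes, (volume : Measure (Fin n → ℝ)).toBoxAdditive J = V :=
      (volume : Measure (Fin n → ℝ)).toBoxAdditive.sum_partition_boxes le_top hπp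
    have hS : |Φ (Set.Icc a b) -
        BoxIntegral.integralSum D (volume : Measure (Fin n → ℝ)).toBoxAdditive.toSMul π| ≤
        ε * V := by
      rw [hΦsum]
      rw [show BoxIntegral.integralSum D
          (volume : Measure (Fin n → ℝ)).toBoxAdditive.toSMul π =
          ∑ J ∈ π.boxes, (volume : Measure (Fin n → ℝ)).toBoxAdditive J * D (π.tag J) from
          Finset.sum_congr rfl fun J _ => by
            rw [BoxIntegral.BoxAdditiveMap.toSMul_apply, smul_eq_mul]]
      rw [← Finset.sum_sub_distrib]
      refine (Finset.abs_sum_le_sum_abs _ _).trans ?_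
      rw [← hsumV, Finset.mul_sum]
      exact Finset.sum_le_sum hbound
    have hdist' : |BoxIntegral.integralSum D
        (volume : Measure (Fin n → ℝ)).toBoxAdditive.toSMul π -
        ∫ x in Set.Icc a b, D x| ≤ ε := by
      rw [← hval]; rw [Real.dist_eq] at hdist; exact hdist
    calc |Φ (Set.Icc a b) - ∫ x in Set.Icc a b, D x|
        ≤ |Φ (Set.Icc a b) -
            BoxIntegral.integralSum D (volume : Measure (Fin n → ℝ)).toBoxAdditive.toSMul π| +
          |BoxIntegral.integralSum D (volume : Measure (Fin n → ℝ)).toBoxAdditive.toSMul π -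
            ∫ x in Set.Icc a b, D x| := abs_sub_le _ _ _
      _ ≤ ε * V + ε := add_le_add hS hdist'
      _ = ε * (V + 1) := by ring
  have hV1 : (0:ℝ) < V + 1 := by linarith
  refine sub_eq_zero.1 (abs_eq_zero.1 (le_antisymm ?_ (abs_nonneg _)))
  refine le_of_forall_pos_le_add fun ε hε => ?_
  rw [zero_add]
  calc |Φ (Set.Icc a b) - ∫ x in Set.Icc a b, D x| ≤ (ε / (V + 1)) * (V + 1) :=
        key _ (div_pos hε hV1)
    _ = ε := div_mul_cancel₀ _ hV1.ne'
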